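/- arXiv:1808.00413 — 4 statements merged into one kernel-verified Lean document; each statement's English description precedes it below -/
import Mathlib

section
/- Let p be a prime. For u ∈ ℤ, let 𝒳_u be the set of tuples (m₁,m₂,m₃,m₄) ∈ {1,…,p}⁴ such that p does not divide any of mₖ or mₖ+u for k=1,…,4, and such that m₁⁻¹ − m₂⁻¹ + m₃⁻¹ − m₄⁻¹ ≡ 0 (mod p) and (m₁+u)⁻¹ − (m₂+u)⁻¹ + (m₃+u)⁻¹ − (m₄+u)⁻¹ ≡ 0 (mod p). Then Σ_{u=1}^{p} #𝒳_u ≤ p(2p² + 4(p−1)²), and in particular Σ_{u≤p} #𝒳_u = O(p³). -/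
def Xset (p : ℕ) (u : ℤ) : Finset (ℕ × ℕ × ℕ × ℕ) :=
  ((Finset.Icc 1 p) ×ˢ (Finset.Icc 1 p) ×ˢ (Finset.Icc 1 p) ×ˢ (Finset.Icc 1 p)).filter
    (fun q =>
      ((q.1 : ZMod p) ≠ 0 ∧ (q.2.1 : ZMod p) ≠ 0 ∧ (q.2.2.1 : ZMod p) ≠ 0 ∧
        (q.2.2.2 : ZMod p) ≠ 0) ∧
      (((q.1 : ℤ) + u : ℤ) : ZMod p) ≠ 0 ∧ (((q.2.1 : ℤ) + u : ℤ) : ZMod p) ≠ 0 ∧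
      (((q.2.2.1 : ℤ) + u : ℤ) : ZMod p) ≠ 0 ∧ (((q.2.2.2 : ℤ) + u : ℤ) : ZMod p) ≠ 0 ∧
      (q.1 : ZMod p)⁻¹ - (q.2.1 : ZMod p)⁻¹ + (q.2.2.1 : ZMod p)⁻¹ - (q.2.2.2 : ZMod p)⁻¹ = 0 ∧
      (((q.1 : ℤ) + u : ℤ) : ZMod p)⁻¹ - (((q.2.1 : ℤ) + u : ℤ) : ZMod p)⁻¹
        + (((q.2.2.1 : ℤ) + u : ℤ) : ZMod p)⁻¹ - (((q.2.2.2 : ℤ) + u : ℤ) : ZMod p)⁻¹ = 0)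

lemma icc_inj {p : ℕ} {m m' : ℕ} (hm : m ∈ Finset.Icc 1 p)
    (hm' : m' ∈ Finset.Icc 1 p) (h : (m : ZMod p) = (m' : ZMod p)) : m = m' := by
  simp only [Finset.mem_Icc] at hm hm'
  have h2 : m % p = m' % p := (ZMod.natCast_eq_natCast_iff' m m' p).mp h
  rcases eq_or_lt_of_le hm.2 with h3 | h3 <;> rcases eq_or_lt_of_le hm'.2 with h4 | h4
  · omega
  · rw [h3, Nat.mod_self, Nat.mod_eq_of_lt h4] at h2; omega
  · rw [h4, Nat.mod_self, Nat.mod_eq_of_lt h3] at h2; omega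
  · rw [Nat.mod_eq_of_lt h3, Nat.mod_eq_of_lt h4] at h2; omega

lemma mem_Xset {p : ℕ} {u : ℤ} {q : ℕ × ℕ × ℕ × ℕ} (hq : q ∈ Xset p u) :
    (q.1 ∈ Finset.Icc 1 p ∧ q.2.1 ∈ Finset.Icc 1 p ∧ q.2.2.1 ∈ Finset.Icc 1 p ∧
      q.2.2.2 ∈ Finset.Icc 1 p) ∧
    ((q.1 : ZMod p) ≠ 0 ∧ (q.2.1 : ZMod p) ≠ 0 ∧ (q.2.2.1 : ZMod p) ≠ 0 ∧
        (q.2.2.2 : ZMod p) ≠ 0) ∧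
    ((q.1 : ZMod p) + (u : ZMod p) ≠ 0 ∧ (q.2.1 : ZMod p) + (u : ZMod p) ≠ 0 ∧
      (q.2.2.1 : ZMod p) + (u : ZMod p) ≠ 0 ∧ (q.2.2.2 : ZMod p) + (u : ZMod p) ≠ 0) ∧
    ((q.1 : ZMod p)⁻¹ - (q.2.1 : ZMod p)⁻¹ + (q.2.2.1 : ZMod p)⁻¹ - (q.2.2.2 : ZMod p)⁻¹ = 0) ∧
    (((q.1 : ZMod p) + (u : ZMod p))⁻¹ - ((q.2.1 : ZMod p) + (u : ZMod p))⁻¹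
      + ((q.2.2.1 : ZMod p) + (u : ZMod p))⁻¹ - ((q.2.2.2 : ZMod p) + (u : ZMod p))⁻¹ = 0) := by
  simp only [Xset, Finset.mem_filter, Finset.mem_product] at hq
  obtain ⟨⟨h1, h2, h3, h4⟩, ⟨n1, n2, n3, n4⟩, g1, g2, g3, g4, e1, e2⟩ := hq
  push_cast at g1 g2 g3 g4 e2
  exact ⟨⟨h1, h2, h3, h4⟩, ⟨n1, n2, n3, n4⟩, ⟨g1, g2, g3, g4⟩, e1, e2⟩

lemma proj_inj (p : ℕ) (u : ℤ) (hp : p.Prime) :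
    Set.InjOn (fun q : ℕ × ℕ × ℕ × ℕ => (q.1, q.2.1, q.2.2.1)) (Xset p u : Finset (ℕ × ℕ × ℕ × ℕ)) := by
  haveI := Fact.mk hp
  rintro q hq q' hq' h
  simp only [Finset.mem_coe] at hq hq'
  obtain ⟨⟨_, _, _, hI4⟩, ⟨_, _, _, _⟩, _, e1, _⟩ := mem_Xset hq
  obtain ⟨⟨_, _, _, hI4'⟩, _, _, e1', _⟩ := mem_Xset hq'
  simp only [Prod.mk.injEq] at h
  obtain ⟨ha, hb, hc⟩ := h
  have h4 : ((q.2.2.2 : ℕ) : ZMod p) = ((q'.2.2.2 : ℕ) : ZMod p) := by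
    apply inv_injective
    rw [ha, hb, hc] at e1
    linear_combination e1' - e1
  have := icc_inj hI4 hI4' h4
  exact Prod.ext ha (Prod.ext hb (Prod.ext hc this))

lemma cardA (p : ℕ) (u : ℤ) (hp : p.Prime) : (Xset p u).card ≤ p ^ 3 := by
  have h := Finset.card_le_card_of_injOn (fun q : ℕ × ℕ × ℕ × ℕ => (q.1, q.2.1, q.2.2.1))
    (t := (Finset.Icc 1 p) ×ˢ (Finset.Icc 1 p) ×ˢ (Finset.Icc 1 p)) ?_ (proj_inj p u hp)
  · refine h.trans ?_
    simp only [Finset.card_product, Nat.card_Icc, Nat.add_sub_cancel]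
    exact le_of_eq (by ring)
  · intro q hq
    obtain ⟨⟨h1, h2, h3, _⟩, _⟩ := mem_Xset hq
    exact Finset.mem_product.mpr ⟨h1, Finset.mem_product.mpr ⟨h2, h3⟩⟩

lemma quad_card {F : Type*} [Field F] [Fintype F] [DecidableEq F] (A B C : F) (hC : C ≠ 0) :
    (Finset.univ.filter fun x : F => A * x ^ 2 + B * x + C = 0).card ≤ 2 := by
  classical
  set P : Polynomial F := Polynomial.C A * Polynomial.X ^ 2 + Polynomial.C B * Polynomial.X +
    Polynomial.C C with hPdef
  have hP0 : P ≠ 0 := by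
    intro h
    apply hC
    have := congrArg (Polynomial.eval 0) h
    simpa [hPdef] using this
  have hdeg : P.natDegree ≤ 2 := by
    rw [hPdef]; compute_degree
  have hsub : (Finset.univ.filter fun x : F => A * x ^ 2 + B * x + C = 0) ⊆ P.roots.toFinset := by
    intro x hx
    simp only [Finset.mem_filter, Finset.mem_univ, true_and] at hx
    rw [Multiset.mem_toFinset, Polynomial.mem_roots hP0]
    simp [Polynomial.IsRoot, hPdef, hx]
  calc (Finset.univ.filter fun x : F => A * x ^ 2 + B * x + C = 0).card
      ≤ P.roots.toFinset.card := Finset.card_le_card hsub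
    _ ≤ Multiset.card P.roots := Multiset.toFinset_card_le _
    _ ≤ P.natDegree := P.card_roots' 
    _ ≤ 2 := hdeg

lemma fiber_off (p : ℕ) (u : ℤ) (hp : p.Prime) (hu : ((u : ZMod p)) ≠ 0)
    {r : ℕ × ℕ} (hr : r ∈ Finset.Icc 1 p ×ˢ Finset.Icc 1 p) (hne : r.1 ≠ r.2) :
    ((Xset p u).filter (fun q => (q.1, q.2.1) = r)).card ≤ 2 := by
  haveI := Fact.mk hp
  classical
  rcases Finset.eq_empty_or_nonempty ((Xset p u).filter (fun q => (q.1, q.2.1) = r)) with he | ⟨q0, hq0⟩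
  · simp [he]
  simp only [Finset.mem_product] at hr
  -- residues of r.1, r.2 differ
  have hres : ((r.1 : ZMod p)) ≠ (r.2 : ZMod p) := fun h => hne (icc_inj hr.1 hr.2 h)
  simp only [Finset.mem_filter] at hq0
  obtain ⟨hq0X, hq0r⟩ := hq0
  obtain ⟨_, ⟨hz1, hz2, _, _⟩, ⟨hw1, hw2, _, _⟩, _, _⟩ := mem_Xset hq0X
  have hq01 : q0.1 = r.1 := congrArg Prod.fst hq0r
  have hq02 : q0.2.1 = r.2 := congrArg Prod.snd hq0r
  rw [hq01] at hz1 hw1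
  rw [hq02] at hz2 hw2
  set v : ZMod p := (u : ZMod p) with hv
  set n1 : ZMod p := (r.1 : ZMod p) with hn1
  set n2 : ZMod p := (r.2 : ZMod p) with hn2
  set a : ZMod p := n1⁻¹ - n2⁻¹ with ha
  set b : ZMod p := (n1 + v)⁻¹ - (n2 + v)⁻¹ with hb
  have hbne : b ≠ 0 := by
    rw [hb]
    refine sub_ne_zero.mpr (fun h => hres ?_)
    have := inv_injective h
    exact add_right_cancel this
  have hCne : -(b * v ^ 2) ≠ 0 := by
    simp only [neg_ne_zero]
    exact mul_ne_zero hbne (pow_ne_zero 2 hu)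
  refine le_trans (Finset.card_le_card_of_injOn (fun q : ℕ × ℕ × ℕ × ℕ => ((q.2.2.1 : ZMod p)))
    (t := Finset.univ.filter fun x : ZMod p =>
      (a - b * (1 + v * a)) * x ^ 2 + (-(b * v * (2 + v * a))) * x + (-(b * v ^ 2)) = 0)
    ?_ ?_) (quad_card _ _ _ hCne)
  · -- maps to roots
    intro q hq
    rw [Finset.mem_coe, Finset.mem_filter] at hq
    obtain ⟨hqX, hqr⟩ := hq
    obtain ⟨_, ⟨_, _, hz3, hz4⟩, ⟨_, _, hw3, hw4⟩, e1, e2⟩ := mem_Xset hqX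
    have hq1 : q.1 = r.1 := congrArg Prod.fst hqr
    have hq2 : q.2.1 = r.2 := congrArg Prod.snd hqr
    rw [hq1, hq2] at e1 e2
    set n3 : ZMod p := (q.2.2.1 : ZMod p) with hn3
    set n4 : ZMod p := (q.2.2.2 : ZMod p) with hn4
    have k1 : n3⁻¹ * n3 = 1 := inv_mul_cancel₀ hz3
    have k2 : n4⁻¹ * n4 = 1 := inv_mul_cancel₀ hz4
    have k1' : (n3 + v)⁻¹ * (n3 + v) = 1 := inv_mul_cancel₀ hw3
    have k2' : (n4 + v)⁻¹ * (n4 + v) = 1 := inv_mul_cancel₀ hw4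
    have h3 : n3⁻¹ - n4⁻¹ = -a := by rw [ha]; linear_combination e1
    have h3' : (n3 + v)⁻¹ - (n4 + v)⁻¹ = -b := by rw [hb]; linear_combination e2
    have h34 : n3 - n4 = a * n3 * n4 := by
      linear_combination (-(n3 * n4)) * h3 + n4 * k1 - n3 * k2
    have h34' : n3 - n4 = b * (n3 + v) * (n4 + v) := by
      linear_combination (-((n3 + v) * (n4 + v))) * h3' + (n4 + v) * k1' - (n3 + v) * k2'
    simp only [Finset.mem_coe, Finset.mem_filter, Finset.mem_univ, true_and]
    linear_combination (1 + a * n3) * h34' - (1 + b * (n3 + v)) * h34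
  · -- injective
    intro q hq q' hq' h
    simp only [Finset.coe_filter, Set.mem_setOf_eq] at hq hq'
    obtain ⟨hqX, hqr⟩ := hq
    obtain ⟨hq'X, hq'r⟩ := hq'
    obtain ⟨⟨_, _, hI3, _⟩, _⟩ := mem_Xset hqX
    obtain ⟨⟨_, _, hI3', _⟩, _⟩ := mem_Xset hq'X
    have h3 : q.2.2.1 = q'.2.2.1 := icc_inj hI3 hI3' h
    rw [Prod.ext_iff] at hqr hq'r
    refine proj_inj p u hp (Finset.mem_coe.mpr hqX) (Finset.mem_coe.mpr hq'X) ?_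
    simp only [Prod.mk.injEq]
    exact ⟨hqr.1.trans hq'r.1.symm, hqr.2.trans hq'r.2.symm, h3⟩

lemma fiber_diag (p : ℕ) (u : ℤ) (hp : p.Prime) (r : ℕ × ℕ) :
    ((Xset p u).filter (fun q => (q.1, q.2.1) = r)).card ≤ p := by
  have h := Finset.card_le_card_of_injOn (fun q : ℕ × ℕ × ℕ × ℕ => q.2.2.1)
    (s := (Xset p u).filter (fun q => (q.1, q.2.1) = r)) (t := Finset.Icc 1 p) ?_ ?_
  · simpa using h
  · intro q hq
    rw [Finset.mem_coe, Finset.mem_filter] at hq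
    exact (mem_Xset hq.1).1.2.2.1
  · intro q hq q' hq' h
    simp only [Finset.coe_filter, Set.mem_setOf_eq] at hq hq'
    obtain ⟨hqX, hqr⟩ := hq
    obtain ⟨hq'X, hq'r⟩ := hq'
    rw [Prod.ext_iff] at hqr hq'r
    refine proj_inj p u hp (Finset.mem_coe.mpr hqX) (Finset.mem_coe.mpr hq'X) ?_
    simp only [Prod.mk.injEq]
    exact ⟨hqr.1.trans hq'r.1.symm, hqr.2.trans hq'r.2.symm, h⟩

lemma cardB (p : ℕ) (u : ℤ) (hp : p.Prime) (hu : ((u : ZMod p)) ≠ 0) :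
    (Xset p u).card ≤ 3 * p ^ 2 := by
  classical
  have hfib := Finset.card_eq_sum_card_fiberwise
    (f := fun q : ℕ × ℕ × ℕ × ℕ => (q.1, q.2.1)) (s := Xset p u)
    (t := Finset.Icc 1 p ×ˢ Finset.Icc 1 p) ?_
  swap
  · intro q hq
    obtain ⟨⟨h1, h2, _, _⟩, _⟩ := mem_Xset hq
    exact Finset.mem_product.mpr ⟨h1, h2⟩
  rw [hfib]
  have key : ∀ r ∈ Finset.Icc 1 p ×ˢ Finset.Icc 1 p,
      ((Xset p u).filter (fun q => (q.1, q.2.1) = r)).card ≤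
        2 + (if r.1 = r.2 then p else 0) := by
    intro r hr
    by_cases hd : r.1 = r.2
    · simp only [hd, if_pos]
      exact le_trans (fiber_diag p u hp r) (by omega)
    · simp only [hd, if_neg, Nat.add_zero, not_false_iff]
      simpa using fiber_off p u hp hu hr hd
  refine le_trans (Finset.sum_le_sum key) ?_
  rw [Finset.sum_add_distrib, Finset.sum_const, Finset.sum_product]
  have inner : ∀ x ∈ Finset.Icc 1 p,
      (∑ y ∈ Finset.Icc 1 p, if x = y then p else 0) = p := by
    intro x hx
    rw [Finset.sum_ite_eq]
    simp [hx]
  rw [Finset.sum_congr rfl inner, Finset.sum_const]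
  simp only [Finset.card_product, Nat.card_Icc, Nat.add_sub_cancel, smul_eq_mul]
  nlinarith [sq_nonneg p]

theorem diophantine_count (p : ℕ) (hp : p.Prime) :
    ∑ u ∈ Finset.Icc (1 : ℕ) p, (Xset p (u : ℤ)).card ≤ p * (2 * p ^ 2 + 4 * (p - 1) ^ 2) := by
  obtain ⟨P, rfl⟩ : ∃ P, p = P + 1 := ⟨p - 1, by have := hp.two_le; omega⟩
  rw [Finset.sum_Icc_succ_top (by omega : 1 ≤ P + 1)]
  have hbound : ∀ u ∈ Finset.Icc 1 P, (Xset (P + 1) (u : ℤ)).card ≤ 3 * (P + 1) ^ 2 := by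
    intro u hu
    simp only [Finset.mem_Icc] at hu
    apply cardB _ _ hp
    simp only [Int.cast_natCast]
    rw [Ne, ZMod.natCast_eq_zero_iff]
    intro hdvd
    have := Nat.le_of_dvd (by omega) hdvd
    omega
  have h1 := Finset.sum_le_sum hbound
  rw [Finset.sum_const, Nat.card_Icc, smul_eq_mul] at h1
  have h2 := cardA (P + 1) ((P + 1 : ℕ) : ℤ) hp
  refine le_trans (add_le_add h1 h2) ?_
  simp only [Nat.add_sub_cancel]
  nlinarith [sq_nonneg P]
end

section
/- Let p be a prime and x,y,w integers with p ∤ y. Define S(x,y,w;p) = Σ_{1≤m<p, p∤(m+w)} e_p(x·m⁻¹ + y·(m+w)⁻¹). Then for any finite set 𝒲 of integers that are pairwise incongruent modulo p, Σ_{w∈𝒲} |S(x,y,w;p)|⁴ = O(p⁴), with an absolute implied constant. -/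
open Finset

noncomputable def ep (p : ℕ) (t : ZMod p) : ℂ :=
  Complex.exp (2 * Real.pi * Complex.I * (t.val : ℂ) / p)

noncomputable def S (p : ℕ) (x y w : ℤ) : ℂ :=
  ∑ m ∈ (Finset.Ico 1 p).filter (fun m : ℕ => ¬ ((p : ℤ) ∣ ((m : ℤ) + w))),
    ep p ((x : ZMod p) * (m : ZMod p)⁻¹ + (y : ZMod p) * (((m : ℤ) + w : ℤ) : ZMod p)⁻¹)

noncomputable def E (p : ℕ) (k : ℤ) : ℂ := Complex.exp (2 * Real.pi * Complex.I * k / p)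

lemma E_add (p : ℕ) (k l : ℤ) : E p (k + l) = E p k * E p l := by
  unfold E
  rw [← Complex.exp_add]
  congr 1
  push_cast
  ring

lemma E_int_mul (p : ℕ) (hp : p ≠ 0) (j : ℤ) : E p ((p : ℤ) * j) = 1 := by
  unfold E
  have hpc : (p : ℂ) ≠ 0 := Nat.cast_ne_zero.mpr hp
  rw [show ((((p:ℤ)*j : ℤ)) : ℂ) = (p:ℂ)*(j:ℂ) by push_cast; ring,
    show 2 * (Real.pi:ℂ) * Complex.I * ((p:ℂ)*(j:ℂ)) / (p:ℂ) = (j:ℤ) * (2 * (Real.pi:ℂ) * Complex.I) by field_simp,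
    Complex.exp_int_mul_two_pi_mul_I]

lemma E_congr {p : ℕ} (hp : p ≠ 0) {k l : ℤ} (h : (k : ZMod p) = (l : ZMod p)) :
    E p k = E p l := by
  have hd : (p : ℤ) ∣ k - l := by
    rwa [← ZMod.intCast_zmod_eq_zero_iff_dvd, Int.cast_sub, sub_eq_zero]
  obtain ⟨j, hj⟩ := hd
  have : k = l + (p : ℤ) * j := by omega
  rw [this, E_add, E_int_mul p hp, mul_one]

lemma ep_eq_E {p : ℕ} (a : ZMod p) : ep p a = E p (a.val : ℤ) := by
  unfold ep E
  norm_num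

lemma ep_intCast {p : ℕ} (hp : p ≠ 0) (k : ℤ) : ep p (k : ZMod p) = E p k := by
  rw [ep_eq_E]
  apply E_congr hp
  haveI : NeZero p := ⟨hp⟩
  push_cast [ZMod.natCast_val, ZMod.cast_id]
  rfl

lemma ep_cast_val {p : ℕ} (hp : p ≠ 0) {k : ℤ} {a : ZMod p} (h : (k : ZMod p) = a) :
    ep p a = E p k := by
  rw [← h, ep_intCast hp]

lemma ep_add {p : ℕ} (hp : p ≠ 0) (a b : ZMod p) : ep p (a + b) = ep p a * ep p b := by
  haveI : NeZero p := ⟨hp⟩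
  rw [ep_eq_E a, ep_eq_E b, ← E_add]
  apply ep_cast_val hp
  push_cast [ZMod.natCast_val, ZMod.cast_id]
  rfl

lemma ep_zero {p : ℕ} : ep p 0 = 1 := by
  unfold ep
  simp

lemma ep_star {p : ℕ} (hp : p ≠ 0) (a : ZMod p) :
    (starRingEnd ℂ) (ep p a) = ep p (-a) := by
  haveI : NeZero p := ⟨hp⟩
  rw [ep_eq_E a, ep_cast_val hp (a := -a) (k := -(a.val : ℤ))
    (by push_cast [ZMod.natCast_val, ZMod.cast_id]; ring)]
  unfold E
  rw [← Complex.exp_conj]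
  congr 1
  rw [map_div₀]
  simp only [map_mul, Complex.conj_I, Complex.conj_ofReal, map_intCast, map_natCast, map_ofNat]
  push_cast
  ring

lemma ep_abs {p : ℕ} (a : ZMod p) : ‖ep p a‖ = 1 := by
  have : ep p a = Complex.exp (((2 * Real.pi * a.val / p : ℝ) : ℂ) * Complex.I) := by
    unfold ep
    congr 1
    push_cast
    ring
  rw [this, Complex.norm_exp_ofReal_mul_I]

lemma ep_eq_one_iff {p : ℕ} (hp : 0 < p) (a : ZMod p) : ep p a = 1 ↔ a = 0 := by
  constructor
  · intro h
    unfold ep at h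
    rw [Complex.exp_eq_one_iff] at h
    obtain ⟨n, hn⟩ := h
    have hpc : (p : ℂ) ≠ 0 := Nat.cast_ne_zero.mpr hp.ne'
    have h2 : (2 : ℂ) * Real.pi * Complex.I ≠ 0 := by
      simp [Real.pi_ne_zero, Complex.I_ne_zero]
    haveI : NeZero p := ⟨hp.ne'⟩
    have hv : (a.val : ℂ) = (n : ℂ) * p := by
      rw [div_eq_iff hpc] at hn
      have h3 : 2 * (Real.pi:ℂ) * Complex.I * (a.val:ℂ)
          = 2 * (Real.pi:ℂ) * Complex.I * ((n:ℂ) * p) := by linear_combination hn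
      exact mul_left_cancel₀ h2 h3
    have hval : (a.val : ℤ) = n * p := by
      have h4 : ((a.val:ℤ):ℂ) = ((n * p : ℤ):ℂ) := by
        rw [Int.cast_natCast, Int.cast_mul, Int.cast_natCast]; exact hv
      exact Int.cast_injective h4
    have h1 : (a.val : ℤ) < p := by exact_mod_cast ZMod.val_lt a
    have h2' : (0:ℤ) ≤ (a.val:ℤ) := Int.natCast_nonneg _
    have hpz : (0:ℤ) < p := by exact_mod_cast hp
    have hv0 : a.val = 0 := by
      rcases le_or_gt n 0 with h | h
      · have : n * (p:ℤ) ≤ 0 := mul_nonpos_of_nonpos_of_nonneg h hpz.le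
        omega
      · have : (p:ℤ) ≤ n * p := le_mul_of_one_le_left hpz.le h
        omega
    exact (ZMod.val_eq_zero a).mp hv0
  · intro h
    rw [h, ep_zero]

lemma sum_ep_mul {p : ℕ} [NeZero p] (c : ZMod p) :
    ∑ a : ZMod p, ep p (a * c) = if c = 0 then (p : ℂ) else 0 := by
  have hp : 0 < p := Nat.pos_of_ne_zero (NeZero.ne p)
  split_ifs with h
  · simp [h, ep_zero, ZMod.card p]
  · have key : ep p c * ∑ a : ZMod p, ep p (a * c) = ∑ a : ZMod p, ep p (a * c) := by
      rw [Finset.mul_sum]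
      rw [← Equiv.sum_comp (Equiv.addLeft (1 : ZMod p)) (fun a => ep p (a * c))]
      apply Finset.sum_congr rfl
      intro a _
      rw [← ep_add hp.ne']
      congr 1
      simp [add_mul]
    have h2 : (ep p c - 1) * ∑ a : ZMod p, ep p (a * c) = 0 := by linear_combination key
    rcases mul_eq_zero.mp h2 with h3 | h3
    · exact absurd ((ep_eq_one_iff hp c).mp (by linear_combination h3)) h
    · exact h3

noncomputable def ff (p : ℕ) (x y : ℤ) (t : ZMod p) : ZMod p :=
  (x : ZMod p) * t⁻¹ + (y : ZMod p) * (t + 1)⁻¹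

def D (p : ℕ) [NeZero p] : Finset (ZMod p) :=
  Finset.univ.filter (fun t => t ≠ 0 ∧ t ≠ -1)

noncomputable def T (p : ℕ) [NeZero p] (x y : ℤ) (a : ZMod p) : ℂ :=
  ∑ t ∈ D p, ep p (a * ff p x y t)

lemma card_fiber_le {p : ℕ} [Fact p.Prime] (u v : ZMod p) (hv : v ≠ 0) (c : ZMod p) :
    ((D p).filter (fun t => u * t⁻¹ + v * (t + 1)⁻¹ = c)).card ≤ 2 := by
  classical
  set g : Polynomial (ZMod p) :=
    Polynomial.C c * Polynomial.X ^ 2 + Polynomial.C (c - u - v) * Polynomial.X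
      + Polynomial.C (-u) with hg_def
  have hg : g ≠ 0 := by
    intro h
    have h2 : c = 0 := by
      have := congrArg (fun q => Polynomial.coeff q 2) h
      simpa [hg_def] using this
    have h0 : u = 0 := by
      have := congrArg (fun q => Polynomial.coeff q 0) h
      simpa [hg_def] using this
    have h1 : c - u - v = 0 := by
      have := congrArg (fun q => Polynomial.coeff q 1) h
      simpa [hg_def] using this
    rw [h2, h0] at h1
    apply hv
    linear_combination -h1
  have hsub : (D p).filter (fun t => u * t⁻¹ + v * (t + 1)⁻¹ = c) ⊆ g.roots.toFinset := by
    intro t ht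
    simp only [D, Finset.mem_filter, Finset.mem_univ, true_and] at ht
    obtain ⟨⟨ht0, ht1⟩, htc⟩ := ht
    have ht1' : t + 1 ≠ 0 := by
      intro h; apply ht1; linear_combination h
    rw [Multiset.mem_toFinset, Polynomial.mem_roots hg]
    field_simp at htc
    simp only [Polynomial.IsRoot, hg_def, Polynomial.eval_add, Polynomial.eval_mul,
      Polynomial.eval_C, Polynomial.eval_pow, Polynomial.eval_X]
    linear_combination -htc
  calc ((D p).filter (fun t => u * t⁻¹ + v * (t + 1)⁻¹ = c)).card
      ≤ g.roots.toFinset.card := Finset.card_le_card hsub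
    _ ≤ Multiset.card g.roots := Multiset.toFinset_card_le _
    _ ≤ g.natDegree := Polynomial.card_roots' g
    _ ≤ 2 := Polynomial.natDegree_quadratic_le

lemma sum_T_pow4 {p : ℕ} [Fact p.Prime] (x y : ℤ) (hy : (y : ZMod p) ≠ 0) :
    ∑ a : ZMod p, (‖T p x y a‖) ^ 4 ≤ 2 * (p : ℝ) ^ 4 := by
  have hp0 : p ≠ 0 := Nat.Prime.ne_zero Fact.out
  have hppos : (0:ℝ) < p := by
    exact_mod_cast Nat.pos_of_ne_zero hp0
  set F := ff p x y with hF
  have hconj : ∀ a : ZMod p, (starRingEnd ℂ) (T p x y a) = ∑ t ∈ D p, ep p (-(a * F t)) := by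
    intro a
    rw [T, map_sum]
    exact Finset.sum_congr rfl (fun t _ => ep_star hp0 _)
  have expand : ∀ a : ZMod p, ((‖T p x y a‖ : ℂ)) ^ 4
      = ∑ t1 ∈ D p, ∑ t2 ∈ D p, ∑ t3 ∈ D p, ∑ t4 ∈ D p,
          ep p (a * (F t4 + F t3 - F t2 - F t1)) := by
    intro a
    have h1 : ((‖T p x y a‖ : ℂ)) ^ 4
        = T p x y a * T p x y a * (starRingEnd ℂ) (T p x y a) * (starRingEnd ℂ) (T p x y a) := by
      have h2 := Complex.mul_conj (T p x y a)
      have h3 : ((‖T p x y a‖ : ℂ)) ^ 4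
          = ((Complex.normSq (T p x y a) : ℝ) : ℂ) ^ 2 := by
        rw [← Complex.sq_norm]
        push_cast
        ring
      rw [h3, ← h2]
      ring
    rw [h1, hconj]
    rw [show T p x y a = ∑ t ∈ D p, ep p (a * F t) from rfl]
    simp only [Finset.sum_mul, Finset.mul_sum]
    refine Finset.sum_congr rfl (fun t1 _ => Finset.sum_congr rfl (fun t2 _ =>
      Finset.sum_congr rfl (fun t3 _ => Finset.sum_congr rfl (fun t4 _ => ?_))))
    rw [← ep_add hp0, ← ep_add hp0, ← ep_add hp0]
    congr 1
    ring
  have key : ∑ a : ZMod p, (‖T p x y a‖) ^ 4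
      = ∑ t1 ∈ D p, ∑ t2 ∈ D p, ∑ t3 ∈ D p, ∑ t4 ∈ D p,
          (if F t4 + F t3 - F t2 - F t1 = 0 then (p:ℝ) else 0) := by
    apply Complex.ofReal_injective
    push_cast [apply_ite (Complex.ofReal : ℝ → ℂ)]
    calc ∑ a : ZMod p, ((‖T p x y a‖ : ℂ)) ^ 4
        = ∑ a : ZMod p, ∑ t1 ∈ D p, ∑ t2 ∈ D p, ∑ t3 ∈ D p, ∑ t4 ∈ D p,
            ep p (a * (F t4 + F t3 - F t2 - F t1)) :=
          Finset.sum_congr rfl (fun a _ => expand a)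
      _ = ∑ t1 ∈ D p, ∑ t2 ∈ D p, ∑ t3 ∈ D p, ∑ t4 ∈ D p,
            (if F t4 + F t3 - F t2 - F t1 = 0 then (p:ℂ) else 0) := by
          rw [Finset.sum_comm]
          refine Finset.sum_congr rfl fun t1 _ => ?_
          rw [Finset.sum_comm]
          refine Finset.sum_congr rfl fun t2 _ => ?_
          rw [Finset.sum_comm]
          refine Finset.sum_congr rfl fun t3 _ => ?_
          rw [Finset.sum_comm]
          refine Finset.sum_congr rfl fun t4 _ => ?_
          exact sum_ep_mul _
  rw [key]
  have hD : ((D p).card : ℝ) ≤ p := by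
    have : (D p).card ≤ p := by
      calc (D p).card ≤ (Finset.univ : Finset (ZMod p)).card :=
            Finset.card_le_card (Finset.filter_subset _ _)
        _ = p := ZMod.card p
    exact_mod_cast this
  have inner : ∀ t1 ∈ D p, ∀ t2 ∈ D p, ∀ t3 ∈ D p,
      ∑ t4 ∈ D p, (if F t4 + F t3 - F t2 - F t1 = 0 then (p:ℝ) else 0) ≤ 2 * p := by
    intro t1 _ t2 _ t3 _
    have heval : ∑ t4 ∈ D p, (if F t4 + F t3 - F t2 - F t1 = 0 then (p:ℝ) else 0)
        = (((D p).filter (fun t4 => F t4 + F t3 - F t2 - F t1 = 0)).card : ℝ) * p := by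
      rw [← Finset.sum_filter, Finset.sum_const, nsmul_eq_mul]
    rw [heval]
    have hcard : ((D p).filter (fun t4 => F t4 + F t3 - F t2 - F t1 = 0)).card ≤ 2 := by
      have heq : (D p).filter (fun t4 => F t4 + F t3 - F t2 - F t1 = 0)
          = (D p).filter (fun t => (x : ZMod p) * t⁻¹ + (y : ZMod p) * (t + 1)⁻¹
              = F t1 + F t2 - F t3) := by
        apply Finset.filter_congr
        intro t _
        simp only [hF, ff]
        constructor
        · intro h
          linear_combination h
        · intro h
          linear_combination h
      rw [heq]
      exact card_fiber_le _ _ hy _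
    have : (((D p).filter (fun t4 => F t4 + F t3 - F t2 - F t1 = 0)).card : ℝ) ≤ 2 := by
      exact_mod_cast hcard
    nlinarith
  calc ∑ t1 ∈ D p, ∑ t2 ∈ D p, ∑ t3 ∈ D p, ∑ t4 ∈ D p,
        (if F t4 + F t3 - F t2 - F t1 = 0 then (p:ℝ) else 0)
      ≤ ∑ t1 ∈ D p, ∑ t2 ∈ D p, ∑ t3 ∈ D p, 2 * (p:ℝ) := by
        refine Finset.sum_le_sum fun t1 h1 => Finset.sum_le_sum fun t2 h2 =>
          Finset.sum_le_sum fun t3 h3 => inner t1 h1 t2 h2 t3 h3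
    _ = ((D p).card : ℝ) * (((D p).card : ℝ) * (((D p).card : ℝ) * (2 * (p:ℝ)))) := by
        simp only [Finset.sum_const, nsmul_eq_mul]
    _ ≤ (p:ℝ) * ((p:ℝ) * ((p:ℝ) * (2 * (p:ℝ)))) := by
        have h0 : (0:ℝ) ≤ ((D p).card : ℝ) := Nat.cast_nonneg _
        gcongr
    _ = 2 * (p:ℝ) ^ 4 := by ring

lemma S_eq_T {p : ℕ} [Fact p.Prime] (x y w : ℤ) (hw : ((w : ZMod p)) ≠ 0) :
    S p x y w = T p x y ((w : ZMod p))⁻¹ := by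
  haveI : NeZero p := ⟨(Fact.out : p.Prime).ne_zero⟩
  have hp1 : 1 < p := (Fact.out : p.Prime).one_lt
  rw [S, T]
  refine Finset.sum_nbij' (fun m => (m : ZMod p) * (w : ZMod p)⁻¹)
    (fun t => (t * (w : ZMod p)).val) ?_ ?_ ?_ ?_ ?_
  · intro m hm
    simp only [Finset.mem_filter, Finset.mem_Ico] at hm
    obtain ⟨⟨hm1, hm2⟩, hmw⟩ := hm
    have hm0 : (m : ZMod p) ≠ 0 := by
      rw [Ne, ZMod.natCast_eq_zero_iff]
      intro hdvd
      have := Nat.le_of_dvd (by omega) hdvd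
      omega
    have hmw0 : (m : ZMod p) + (w : ZMod p) ≠ 0 := by
      intro h
      apply hmw
      rw [← ZMod.intCast_zmod_eq_zero_iff_dvd]
      push_cast
      exact h
    simp only [D, Finset.mem_filter, Finset.mem_univ, true_and]
    constructor
    · exact mul_ne_zero hm0 (inv_ne_zero hw)
    · intro h
      apply hmw0
      have : (m : ZMod p) = -(w : ZMod p) := by
        have := congrArg (· * (w : ZMod p)) h
        simpa [inv_mul_cancel_right₀ hw] using this
      rw [this]; ring
  · intro t ht
    simp only [D, Finset.mem_filter, Finset.mem_univ, true_and] at ht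
    obtain ⟨ht0, ht1⟩ := ht
    have htw : t * (w : ZMod p) ≠ 0 := mul_ne_zero ht0 hw
    have hval : ((t * (w : ZMod p)).val : ZMod p) = t * (w : ZMod p) := by
      simp [ZMod.natCast_val, ZMod.cast_id]
    simp only [Finset.mem_filter, Finset.mem_Ico]
    refine ⟨⟨?_, ZMod.val_lt _⟩, ?_⟩
    · rcases Nat.eq_zero_or_pos (t * (w : ZMod p)).val with h | h
      · exact absurd ((ZMod.val_eq_zero _).mp h) htw
      · exact h
    · intro hdvd
      rw [← ZMod.intCast_zmod_eq_zero_iff_dvd] at hdvd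
      push_cast at hdvd
      rw [hval] at hdvd
      apply ht1
      have : (t + 1) * (w : ZMod p) = 0 := by linear_combination hdvd
      rcases mul_eq_zero.mp this with h | h
      · linear_combination h
      · exact absurd h hw
  · intro m hm
    simp only [Finset.mem_filter, Finset.mem_Ico] at hm
    show (((m : ZMod p) * (w : ZMod p)⁻¹) * (w : ZMod p)).val = m
    rw [inv_mul_cancel_right₀ hw]
    exact ZMod.val_natCast_of_lt hm.1.2
  · intro t ht
    have hval : ((t * (w : ZMod p)).val : ZMod p) = t * (w : ZMod p) := by
      simp [ZMod.natCast_val, ZMod.cast_id]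
    show (((t * (w : ZMod p)).val : ZMod p)) * (w : ZMod p)⁻¹ = t
    rw [hval, mul_inv_cancel_right₀ hw]
  · intro m hm
    simp only [Finset.mem_filter, Finset.mem_Ico] at hm
    obtain ⟨⟨hm1, hm2⟩, hmw⟩ := hm
    have hm0 : (m : ZMod p) ≠ 0 := by
      rw [Ne, ZMod.natCast_eq_zero_iff]
      intro hdvd
      have := Nat.le_of_dvd (by omega) hdvd
      omega
    have hmw0 : (m : ZMod p) + (w : ZMod p) ≠ 0 := by
      intro h
      apply hmw
      rw [← ZMod.intCast_zmod_eq_zero_iff_dvd]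
      push_cast
      exact h
    congr 1
    have hcast : (((m : ℤ) + w : ℤ) : ZMod p) = (m : ZMod p) + (w : ZMod p) := by push_cast; rfl
    rw [hcast]
    unfold ff
    field_simp

lemma S_abs_le {p : ℕ} (x y w : ℤ) : ‖S p x y w‖ ≤ (p : ℝ) := by
  rw [S]
  calc ‖∑ m ∈ (Finset.Ico 1 p).filter (fun m : ℕ => ¬ ((p : ℤ) ∣ ((m : ℤ) + w))),
        ep p ((x : ZMod p) * (m : ZMod p)⁻¹ + (y : ZMod p) * (((m : ℤ) + w : ℤ) : ZMod p)⁻¹)‖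
      ≤ ∑ m ∈ (Finset.Ico 1 p).filter (fun m : ℕ => ¬ ((p : ℤ) ∣ ((m : ℤ) + w))),
        ‖ep p ((x : ZMod p) * (m : ZMod p)⁻¹
          + (y : ZMod p) * (((m : ℤ) + w : ℤ) : ZMod p)⁻¹)‖ :=
      norm_sum_le _ _
    _ = ((Finset.Ico 1 p).filter (fun m : ℕ => ¬ ((p : ℤ) ∣ ((m : ℤ) + w)))).card := by
      rw [Finset.sum_congr rfl (fun m _ => ep_abs _), Finset.sum_const, nsmul_eq_mul, mul_one]
    _ ≤ (p : ℝ) := by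
      have h1 : ((Finset.Ico 1 p).filter (fun m : ℕ => ¬ ((p : ℤ) ∣ ((m : ℤ) + w)))).card ≤ p := by
        calc _ ≤ (Finset.Ico 1 p).card := Finset.card_le_card (Finset.filter_subset _ _)
          _ ≤ p := by rw [Nat.card_Ico]; omega
      exact_mod_cast h1

theorem fourth_moment_bound :
    ∃ C : ℝ, 0 < C ∧ ∀ (p : ℕ), p.Prime → ∀ (x y : ℤ), ¬ ((p : ℤ) ∣ y) →
      ∀ (𝒲 : Finset ℤ),
        (∀ w ∈ 𝒲, ∀ w' ∈ 𝒲, ((w : ZMod p) = (w' : ZMod p)) → w = w') →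
        ∑ w ∈ 𝒲, (‖S p x y w‖) ^ 4 ≤ C * (p : ℝ) ^ 4 := by
  refine ⟨3, by norm_num, ?_⟩
  intro p hp x y hy 𝒲 hpair
  haveI : Fact p.Prime := ⟨hp⟩
  haveI : NeZero p := ⟨hp.ne_zero⟩
  classical
  have hppos : (0:ℝ) < p := by exact_mod_cast hp.pos
  have hyz : (y : ZMod p) ≠ 0 := by
    rw [Ne, ZMod.intCast_zmod_eq_zero_iff_dvd]
    exact hy
  rw [← Finset.sum_filter_add_sum_filter_not 𝒲 (fun w : ℤ => ((w : ZMod p) = 0))]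
  have part0 : ∑ w ∈ 𝒲.filter (fun w : ℤ => ((w : ZMod p) = 0)), (‖S p x y w‖) ^ 4
      ≤ (p : ℝ) ^ 4 := by
    have hcard : (𝒲.filter (fun w : ℤ => ((w : ZMod p) = 0))).card ≤ 1 := by
      rw [Finset.card_le_one]
      intro a ha b hb
      simp only [Finset.mem_filter] at ha hb
      exact hpair a ha.1 b hb.1 (by rw [ha.2, hb.2])
    calc ∑ w ∈ 𝒲.filter (fun w : ℤ => ((w : ZMod p) = 0)), (‖S p x y w‖) ^ 4
        ≤ ∑ w ∈ 𝒲.filter (fun w : ℤ => ((w : ZMod p) = 0)), (p : ℝ) ^ 4 := by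
          refine Finset.sum_le_sum fun w _ => ?_
          exact pow_le_pow_left₀ (norm_nonneg _) (S_abs_le x y w) 4
      _ = (𝒲.filter (fun w : ℤ => ((w : ZMod p) = 0))).card * (p : ℝ) ^ 4 := by
          rw [Finset.sum_const, nsmul_eq_mul]
      _ ≤ 1 * (p : ℝ) ^ 4 := by
          have h1 : ((𝒲.filter (fun w : ℤ => ((w : ZMod p) = 0))).card : ℝ) ≤ 1 := by
            exact_mod_cast hcard
          exact mul_le_mul_of_nonneg_right h1 (by positivity)
      _ = (p : ℝ) ^ 4 := by ring
  have part1 : ∑ w ∈ 𝒲.filter (fun w : ℤ => ¬ ((w : ZMod p) = 0)), (‖S p x y w‖) ^ 4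
      ≤ 2 * (p : ℝ) ^ 4 := by
    have hrw : ∑ w ∈ 𝒲.filter (fun w : ℤ => ¬ ((w : ZMod p) = 0)), (‖S p x y w‖) ^ 4
        = ∑ w ∈ 𝒲.filter (fun w : ℤ => ¬ ((w : ZMod p) = 0)),
            (‖T p x y ((w : ZMod p))⁻¹‖) ^ 4 := by
      refine Finset.sum_congr rfl fun w hw => ?_
      simp only [Finset.mem_filter] at hw
      rw [S_eq_T x y w hw.2]
    rw [hrw]
    have hinj : Set.InjOn (fun w : ℤ => ((w : ZMod p))⁻¹)
        (𝒲.filter (fun w : ℤ => ¬ ((w : ZMod p) = 0))) := by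
      intro a ha b hb hab
      simp only [Finset.coe_filter, Set.mem_setOf_eq] at ha hb
      have : (a : ZMod p) = (b : ZMod p) := inv_injective hab
      exact hpair a ha.1 b hb.1 this
    have himg := Finset.sum_image (f := fun a : ZMod p => (‖T p x y a‖) ^ 4)
      (g := fun w : ℤ => ((w : ZMod p))⁻¹)
      (s := 𝒲.filter (fun w : ℤ => ¬ ((w : ZMod p) = 0)))
      (fun a ha b hb h => hinj ha hb h)
    rw [← himg]
    calc ∑ a ∈ (𝒲.filter (fun w : ℤ => ¬ ((w : ZMod p) = 0))).image (fun w : ℤ => ((w : ZMod p))⁻¹),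
          (‖T p x y a‖) ^ 4
        ≤ ∑ a : ZMod p, (‖T p x y a‖) ^ 4 := by
          refine Finset.sum_le_sum_of_subset_of_nonneg (Finset.subset_univ _) ?_
          intro a _ _
          positivity
      _ ≤ 2 * (p : ℝ) ^ 4 := sum_T_pow4 x y hyz
  linarith
end

section
/- Let α > 1 be real and N ≤ p where p is a prime. Then for any reals β, γ and any residue s modulo p, the number of n ∈ {1,…,N} with ⌊nα + β − γ⌋ ≡ s (mod p) is less than 1 + α. -/
theorem residue_class_count (p : ℕ) (hp : p.Prime) (α β γ : ℝ) (hα : 1 < α)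
    (N : ℕ) (hN : N ≤ p) (s : ℤ) :
    (((Finset.Icc 1 N).filter
        (fun n : ℕ => ((⌊(n : ℝ) * α + β - γ⌋ : ℤ) : ZMod p) = (s : ZMod p))).card : ℝ)
      < 1 + α := by
  set f : ℕ → ℤ := fun n => ⌊(n : ℝ) * α + β - γ⌋ with hf
  set S := (Finset.Icc 1 N).filter
      (fun n : ℕ => ((f n : ℤ) : ZMod p) = (s : ZMod p)) with hS
  by_cases hcard : S.card ≤ 1
  · have : (S.card : ℝ) ≤ 1 := by exact_mod_cast hcard
    linarith
  push_neg at hcard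
  have hne : S.Nonempty := Finset.card_pos.mp (by omega)
  set a := S.min' hne with hadef
  set b := S.max' hne with hbdef
  have ha : a ∈ S := S.min'_mem hne
  have hb : b ∈ S := S.max'_mem hne
  have hppos : (0:ℤ) < (p:ℤ) := by exact_mod_cast hp.pos
  -- strict monotonicity of f
  have hmono : ∀ n m : ℕ, n < m → f n < f m := by
    intro n m hnm
    have h1 : (n : ℝ) * α + β - γ + 1 ≤ (m : ℝ) * α + β - γ := by
      have : (n : ℝ) + 1 ≤ (m : ℝ) := by exact_mod_cast hnm
      nlinarith
    have := Int.floor_le_floor h1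
    rw [Int.floor_add_one] at this
    simpa [hf] using by omega
  have hmono' : ∀ n m : ℕ, n ≤ m → f n ≤ f m := by
    intro n m hnm
    rcases eq_or_lt_of_le hnm with rfl | h
    · exact le_refl _
    · exact (hmono n m h).le
  -- divisibility
  have hdvd : ∀ n ∈ S, (p:ℤ) ∣ f n - f a := by
    intro n hn
    have h1 : ((f n : ℤ) : ZMod p) = (s : ZMod p) := (Finset.mem_filter.mp hn).2
    have h2 : ((f a : ℤ) : ZMod p) = (s : ZMod p) := (Finset.mem_filter.mp ha).2
    have : ((f n - f a : ℤ) : ZMod p) = 0 := by push_cast [h1, h2]; ring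
    exact (ZMod.intCast_zmod_eq_zero_iff_dvd _ _).mp this
  set K : ℤ := (f b - f a) / p with hK
  have hKmul : K * (p:ℤ) = f b - f a := Int.ediv_mul_cancel (hdvd b hb)
  have hab : a ≤ b := S.min'_le b hb
  have hKnonneg : 0 ≤ K := by
    have : 0 ≤ f b - f a := by have := hmono' a b hab; omega
    positivity
  -- injection into Icc 0 K
  have hcardle : S.card ≤ (Finset.Icc (0:ℤ) K).card := by
    apply Finset.card_le_card_of_injOn (fun n => (f n - f a) / p)
    · intro n hn
      have h1 : f a ≤ f n := hmono' a n (S.min'_le n hn)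
      have h2 : f n ≤ f b := hmono' n b (S.le_max' n hn)
      have e1 : ((f n - f a) / p) * (p:ℤ) = f n - f a := Int.ediv_mul_cancel (hdvd n hn)
      simp only [Finset.mem_coe, Finset.mem_Icc]
      constructor
      · nlinarith
      · nlinarith
    · intro n hn m hm hnm
      simp only at hnm
      have e1 : ((f n - f a) / p) * (p:ℤ) = f n - f a := Int.ediv_mul_cancel (hdvd n hn)
      have e2 : ((f m - f a) / p) * (p:ℤ) = f m - f a := Int.ediv_mul_cancel (hdvd m hm)
      have : f n = f m := by rw [hnm] at e1; omega
      by_contra hne'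
      rcases lt_or_gt_of_ne hne' with h | h
      · exact absurd this (hmono n m h).ne
      · exact absurd this.symm (hmono m n h).ne
  have hIcc : (Finset.Icc (0:ℤ) K).card = (K + 1).toNat := by
    rw [Int.card_Icc]; ring_nf
  -- real estimate on K
  have hfb : (f b : ℝ) ≤ (b : ℝ) * α + β - γ := Int.floor_le _
  have hfa : (a : ℝ) * α + β - γ - 1 < (f a : ℝ) := by
    have := Int.lt_floor_add_one ((a : ℝ) * α + β - γ); linarith
  have haN : 1 ≤ a := (Finset.mem_Icc.mp (Finset.mem_filter.mp ha).1).1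
  have hbN : b ≤ N := (Finset.mem_Icc.mp (Finset.mem_filter.mp hb).1).2
  have hba : (b : ℝ) - (a : ℝ) ≤ (N : ℝ) - 1 := by
    have h1 : (1:ℝ) ≤ (a:ℝ) := by exact_mod_cast haN
    have h2 : (b:ℝ) ≤ (N:ℝ) := by exact_mod_cast hbN
    linarith
  have hNp : (N : ℝ) ≤ (p : ℝ) := by exact_mod_cast hN
  have hKR : (K : ℝ) * (p : ℝ) = (f b : ℝ) - (f a : ℝ) := by exact_mod_cast hKmul
  have hpR : (1:ℝ) ≤ (p : ℝ) := by exact_mod_cast hp.one_lt.le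
  have hKlt : (K : ℝ) < α := by
    have h1 : (K : ℝ) * (p : ℝ) < ((b:ℝ) - (a:ℝ)) * α + 1 := by
      rw [hKR]; linarith
    have h2 : ((b:ℝ) - (a:ℝ)) * α ≤ ((N:ℝ) - 1) * α := by nlinarith
    have h3 : ((N:ℝ) - 1) * α + 1 ≤ ((p:ℝ) - 1) * α + 1 := by nlinarith
    have h4 : ((p:ℝ) - 1) * α + 1 < (p:ℝ) * α := by nlinarith
    nlinarith
  -- conclude
  have hfin : (S.card : ℝ) ≤ (K : ℝ) + 1 := by
    have h1 : (S.card : ℤ) ≤ K + 1 := by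
      have := hcardle
      rw [hIcc] at this
      omega
    exact_mod_cast h1
  linarith
end

section
/- Let p be a prime, z an integer coprime to p, α ≥ 1, β ≥ 0, and let M < p be a positive integer. Suppose that for every integer y with 1 ≤ y < p, |Σ_{m≤M, m∈ℬ(α,β)} e_p(y·m⁻¹)| ≤ M(M − β − α)/(p·(log p)·α), where the sum is over m ≤ M lying in the Beatty set ℬ(α,β) (all such m are coprime to p since m < p). Then there exists a pair (m, m̃) of integers with 1 ≤ m, m̃ < p, m ∈ ℬ(α,β), m·m̃ ≡ z (mod p), and max{m, m̃} ≤ M. -/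
def Beatty (α β : ℝ) : Set ℤ := {m : ℤ | ∃ n : ℕ, 1 ≤ n ∧ m = ⌊(n : ℝ) * α + β⌋}

attribute [local instance] Classical.propDecidable

namespace HypAux

lemma ep_eq_pow (p : ℕ) (t : ZMod p) :
    ep p t = Complex.exp (2 * Real.pi * Complex.I / p) ^ t.val := by
  rw [ep, ← Complex.exp_nat_mul]
  congr 1
  ring

lemma ep_eq_real (p : ℕ) (t : ZMod p) :
    ep p t = Complex.exp (((2 * Real.pi * t.val / p : ℝ) : ℂ) * Complex.I) := by
  rw [ep]; congr 1; push_cast; ring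

lemma ep_zero (p : ℕ) [NeZero p] : ep p 0 = 1 := by
  simp [ep, ZMod.val_zero]

lemma abs_ep (p : ℕ) (t : ZMod p) : ‖ep p t‖ = 1 := by
  rw [ep_eq_real, Complex.norm_exp_ofReal_mul_I]

lemma ep_add (p : ℕ) [NeZero p] (s t : ZMod p) :
    ep p (s + t) = ep p s * ep p t := by
  rw [ep_eq_pow, ep_eq_pow, ep_eq_pow, ← pow_add]
  have h : s.val + t.val = (s + t).val + p * ((s.val + t.val) / p) := by
    rw [ZMod.val_add]; exact (Nat.mod_add_div _ _).symm
  rw [h, pow_add, pow_mul, (Complex.isPrimitiveRoot_exp p (NeZero.ne p)).pow_eq_one,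
    one_pow, mul_one]

lemma ep_mul_natCast (p : ℕ) [NeZero p] (y : ZMod p) (n : ℕ) :
    ep p (y * (n : ZMod p)) = ep p y ^ n := by
  induction n with
  | zero => simpa using ep_zero p
  | succ n ih =>
    push_cast
    rw [mul_add, mul_one, ep_add, ih, pow_succ]

lemma sum_ep_univ (p : ℕ) [NeZero p] (hp : 1 < p) :
    ∑ y : ZMod p, ep p y = 0 := by
  have h : ∑ y : ZMod p, ep p y
      = ∑ j ∈ Finset.range p, Complex.exp (2 * Real.pi * Complex.I / p) ^ j := by
    refine (Finset.sum_nbij' (i := fun (j : ℕ) => (j : ZMod p)) (j := fun y => y.val)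
      ?_ ?_ ?_ ?_ ?_).symm
    · intro a _; exact Finset.mem_univ _
    · intro a _; exact Finset.mem_range.2 a.val_lt
    · intro a ha; exact ZMod.val_natCast_of_lt (Finset.mem_range.1 ha)
    · intro a _; simp [ZMod.natCast_val, ZMod.cast_id]
    · intro a ha
      rw [ep_eq_pow, ZMod.val_natCast_of_lt (Finset.mem_range.1 ha)]
  rw [h, (Complex.isPrimitiveRoot_exp p (by omega)).geom_sum_eq_zero hp]

lemma sum_ep_mul (p : ℕ) [Fact p.Prime] (c : ZMod p) (hc : c ≠ 0) :
    ∑ y : ZMod p, ep p (y * c) = 0 := by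
  have hpp := Fact.out (p := p.Prime)
  haveI : NeZero p := ⟨hpp.ne_zero⟩
  rw [Fintype.sum_equiv (Equiv.mulRight₀ c hc) (fun y => ep p (y * c)) (ep p)
    (fun x => by simp)]
  exact sum_ep_univ p hpp.one_lt

lemma abs_exp_mul_I_sub_one (x : ℝ) :
    ‖Complex.exp ((x : ℂ) * Complex.I) - 1‖ = 2 * |Real.sin (x / 2)| := by
  have hrw : Complex.exp ((x : ℂ) * Complex.I) - 1
      = Complex.ofReal (Real.cos x - 1) + Complex.ofReal (Real.sin x) * Complex.I := by
    rw [Complex.exp_mul_I, ← Complex.ofReal_cos, ← Complex.ofReal_sin]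
    push_cast; ring
  rw [hrw, Complex.norm_def, Complex.normSq_add_mul_I]
  have h1 : Real.sin (x / 2) ^ 2 = 1 / 2 - Real.cos x / 2 := by
    have := Real.sin_sq_eq_half_sub (x / 2)
    rwa [show 2 * (x / 2) = x by ring] at this
  have h2 := Real.sin_sq_add_cos_sq x
  have h3 : (Real.cos x - 1) ^ 2 + Real.sin x ^ 2 = (2 * |Real.sin (x / 2)|) ^ 2 := by
    rw [mul_pow, sq_abs]; nlinarith
  rw [h3, Real.sqrt_sq (by positivity)]

lemma abs_geom_sum_le {w : ℂ} (hw : w ≠ 1) (habs : ‖w‖ = 1) (M : ℕ) :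
    ‖∑ j ∈ Finset.Icc 1 M, w ^ j‖ ≤ 2 / ‖w - 1‖ := by
  have h1 : (w - 1) * ∑ j ∈ Finset.Icc 1 M, w ^ j = w ^ (M + 1) - w := by
    induction M with
    | zero => simp
    | succ M ih =>
      rw [Finset.sum_Icc_succ_top (by omega)]
      rw [mul_add]
      rw [ih]
      ring
  have hw0 : (0:ℝ) < ‖w - 1‖ := by
    simpa using (norm_pos_iff.2 (sub_ne_zero_of_ne hw))
  rw [le_div_iff₀ hw0, mul_comm, ← norm_mul, h1]
  calc ‖w ^ (M+1) - w‖ ≤ ‖w ^ (M+1)‖ + ‖w‖ :=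
        norm_sub_le _ _
  _ ≤ 2 := by rw [norm_pow, habs, one_pow]; norm_num

lemma sin_lb (p v : ℕ) (hp : 0 < p) (h1 : 1 ≤ v) (h2 : v < p) :
    2 * min (v:ℝ) ((p:ℝ) - v) / p ≤ Real.sin (Real.pi * v / p) := by
  have hppos : (0:ℝ) < p := by exact_mod_cast hp
  have hpi := Real.pi_pos
  rcases le_or_gt (2 * v) p with h | h
  · have hmin : min (v:ℝ) ((p:ℝ) - v) = v := by
      apply min_eq_left
      have : (2:ℝ) * v ≤ p := by exact_mod_cast h
      linarith
    rw [hmin]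
    have hvle : (2:ℝ) * v ≤ p := by exact_mod_cast h
    have hj := Real.mul_le_sin (x := Real.pi * v / p) (by positivity)
      (by rw [div_le_div_iff₀ hppos two_pos]; nlinarith)
    calc 2 * (v:ℝ) / p = 2 / Real.pi * (Real.pi * v / p) := by field_simp
    _ ≤ Real.sin (Real.pi * v / p) := hj
  · have hmin : min (v:ℝ) ((p:ℝ) - v) = (p:ℝ) - v := by
      apply min_eq_right
      have : (p:ℝ) < 2 * v := by exact_mod_cast h
      linarith
    rw [hmin]
    have hsin : Real.sin (Real.pi * v / p) = Real.sin (Real.pi * ((p:ℝ) - v) / p) := by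
      rw [← Real.sin_pi_sub]
      congr 1
      field_simp
    rw [hsin]
    have h2v : 2 * ((p:ℝ) - v) ≤ p := by
      have : (p:ℝ) < 2 * v := by exact_mod_cast h
      linarith
    have hpv : (0:ℝ) ≤ (p:ℝ) - v := by
      have : (v:ℝ) < p := by exact_mod_cast h2
      linarith
    have hj := Real.mul_le_sin (x := Real.pi * ((p:ℝ) - v) / p)
      (div_nonneg (by nlinarith) hppos.le) (by rw [div_le_div_iff₀ hppos two_pos]; nlinarith)
    calc 2 * ((p:ℝ) - v) / p = 2 / Real.pi * (Real.pi * ((p:ℝ) - v) / p) := by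
          field_simp
    _ ≤ _ := hj

lemma G_bound (p : ℕ) [NeZero p] (hp : 1 < p) (M : ℕ) (y : ZMod p) (hy : y ≠ 0) :
    ‖∑ mt ∈ Finset.Icc 1 M, ep p (y * (mt : ZMod p))‖
      ≤ (p:ℝ) / (2 * min (y.val : ℝ) ((p:ℝ) - y.val)) := by
  set v := y.val with hv
  have hv1 : 1 ≤ v := Nat.one_le_iff_ne_zero.2 (fun h => hy ((ZMod.val_eq_zero y).1 h))
  have hv2 : v < p := y.val_lt
  set w := ep p y with hw
  have habs : ‖w‖ = 1 := abs_ep p y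
  have hwne : w ≠ 1 := by
    rw [hw, ep_eq_pow]
    intro hcon
    have := (Complex.isPrimitiveRoot_exp p (by omega)).pow_eq_one_iff_dvd v |>.1 hcon
    have := Nat.le_of_dvd (by omega) this
    omega
  have hrw : ∀ mt : ℕ, ep p (y * (mt : ZMod p)) = w ^ mt := fun mt => ep_mul_natCast p y mt
  rw [Finset.sum_congr rfl (fun mt _ => hrw mt)]
  refine (abs_geom_sum_le hwne habs M).trans ?_
  have hx : w - 1 = Complex.exp (((2 * Real.pi * v / p : ℝ) : ℂ) * Complex.I) - 1 := by
    rw [hw, ep_eq_real]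
  have habs1 : ‖w - 1‖ = 2 * |Real.sin (Real.pi * v / p)| := by
    rw [hx, abs_exp_mul_I_sub_one]
    congr 2
    ring
  have hsin := sin_lb p v (by omega) hv1 hv2
  have hminpos : (0:ℝ) < min (v:ℝ) ((p:ℝ) - v) := by
    have h1 : (0:ℝ) < (v:ℝ) := by exact_mod_cast hv1
    have h2 : (v:ℝ) < (p:ℝ) := by exact_mod_cast hv2
    simp only [lt_min_iff]
    constructor <;> linarith
  have hsinpos : (0:ℝ) < Real.sin (Real.pi * v / p) := by
    have hppos : (0:ℝ) < p := by positivity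
    calc (0:ℝ) < 2 * min (v:ℝ) ((p:ℝ) - v) / p := by positivity
    _ ≤ _ := hsin
  rw [habs1, abs_of_pos hsinpos]
  rw [div_le_div_iff₀ (by positivity) (by positivity)]
  have hppos : (0:ℝ) < p := by positivity
  have := (div_le_iff₀ hppos).1 hsin
  nlinarith [hminpos]

lemma two_mul_le_log_div {t : ℝ} (h0 : 0 ≤ t) (h1 : t < 1) :
    2 * t ≤ Real.log (1 + t) - Real.log (1 - t) := by
  have hs := Real.hasSum_log_sub_log_of_abs_lt_one (x := t) (by rwa [abs_of_nonneg h0])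
  have h2 := le_hasSum hs 0 (fun j _ => by positivity)
  simpa using h2

lemma harmonic_le_log (n : ℕ) :
    ∑ v ∈ Finset.Icc 1 n, (1 : ℝ) / v ≤ Real.log (2 * n + 1) := by
  induction n with
  | zero => simp
  | succ n ih =>
    rw [Finset.sum_Icc_succ_top (by omega)]
    have key : (1:ℝ) / ((n:ℝ) + 1) ≤ Real.log (2 * (n:ℝ) + 3) - Real.log (2 * (n:ℝ) + 1) := by
      have hd : (0:ℝ) < 2 * (n:ℝ) + 2 := by positivity
      set t : ℝ := 1 / (2 * (n:ℝ) + 2) with ht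
      have ht0 : 0 ≤ t := by positivity
      have ht1 : t < 1 := by
        rw [ht, div_lt_one hd]; linarith
      have h2 := two_mul_le_log_div ht0 ht1
      have e1 : 1 + t = (2 * (n:ℝ) + 3) / (2 * (n:ℝ) + 2) := by
        rw [ht]; field_simp; ring
      have e2 : 1 - t = (2 * (n:ℝ) + 1) / (2 * (n:ℝ) + 2) := by
        rw [ht]; field_simp; ring
      rw [e1, e2, Real.log_div (by positivity) (by positivity),
        Real.log_div (by positivity) (by positivity)] at h2
      have e3 : 2 * t = 1 / ((n:ℝ) + 1) := by rw [ht]; field_simp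
      rw [e3] at h2
      linarith
    push_cast
    rw [show (2:ℝ) * ((n:ℝ)+1) + 1 = 2 * (n:ℝ) + 3 by ring]
    linarith

lemma kernel_sum (p : ℕ) (hp : p.Prime) :
    ∑ v ∈ Finset.Icc 1 (p - 1), (p:ℝ) / (2 * min (v:ℝ) ((p:ℝ) - v))
      ≤ (p:ℝ) * Real.log p := by
  rcases hp.eq_two_or_odd' with rfl | hodd
  · norm_num
    have := Real.log_two_gt_d9
    norm_num at this ⊢
    linarith
  · obtain ⟨h, rfl⟩ := hodd
    have hh : ∀ v ∈ Finset.Icc 1 h, (( (2*h+1 : ℕ) :ℝ)) / (2 * min (v:ℝ) (((2*h+1:ℕ):ℝ) - v))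
        = ((2*h+1:ℕ):ℝ) / (2 * v) := by
      intro v hv
      rw [Finset.mem_Icc] at hv
      congr 2
      apply min_eq_left
      push_cast
      have : (v:ℝ) ≤ h := by exact_mod_cast hv.2
      linarith
    have hsplit : Finset.Icc 1 (2*h+1-1) = Finset.Icc 1 h ∪ Finset.Icc (h+1) (2*h) := by
      ext a
      simp only [Finset.mem_Icc, Finset.mem_union]
      omega
    have hdisj : Disjoint (Finset.Icc 1 h) (Finset.Icc (h+1) (2*h)) := by
      rw [Finset.disjoint_left]
      intro a ha hb
      rw [Finset.mem_Icc] at ha hb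
      omega
    rw [hsplit, Finset.sum_union hdisj]
    have hsecond : ∑ v ∈ Finset.Icc (h+1) (2*h), ((2*h+1:ℕ):ℝ) / (2 * min (v:ℝ) (((2*h+1:ℕ):ℝ) - v))
        = ∑ v ∈ Finset.Icc 1 h, ((2*h+1:ℕ):ℝ) / (2 * v) := by
      refine Finset.sum_nbij' (i := fun v => 2*h+1-v) (j := fun v => 2*h+1-v) ?_ ?_ ?_ ?_ ?_
      · intro a ha; simp only [Finset.mem_Icc] at ha ⊢; omega
      · intro a ha; simp only [Finset.mem_Icc] at ha ⊢; omega
      · intro a ha; simp only [Finset.mem_Icc] at ha; omega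
      · intro a ha; simp only [Finset.mem_Icc] at ha; omega
      · intro a ha
        simp only [Finset.mem_Icc] at ha
        have hc : ((2*h+1-a : ℕ):ℝ) = ((2*h+1:ℕ):ℝ) - a := by
          push_cast [Nat.cast_sub (by omega : a ≤ 2*h+1)]
          ring
        rw [hc]
        congr 2
        apply min_eq_right
        push_cast
        have h1 : (h:ℝ) + 1 ≤ (a:ℝ) := by exact_mod_cast ha.1
        linarith
    rw [Finset.sum_congr rfl hh, hsecond]
    have hcomb : ∑ v ∈ Finset.Icc 1 h, ((2*h+1:ℕ):ℝ)/(2*v) + ∑ v ∈ Finset.Icc 1 h, ((2*h+1:ℕ):ℝ)/(2*v)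
        = ((2*h+1:ℕ):ℝ) * ∑ v ∈ Finset.Icc 1 h, (1:ℝ)/v := by
      rw [← Finset.sum_add_distrib, Finset.mul_sum]
      refine Finset.sum_congr rfl fun v hv => ?_
      rw [Finset.mem_Icc] at hv
      have hv0 : (0:ℝ) < v := by exact_mod_cast hv.1
      field_simp
      ring
    rw [hcomb]
    have := harmonic_le_log h
    have hlog : Real.log (2 * (h:ℝ) + 1) = Real.log ((2*h+1 : ℕ):ℝ) := by
      congr 1; push_cast; ring
    rw [hlog] at this
    have hp0 : (0:ℝ) ≤ ((2*h+1:ℕ):ℝ) := by positivity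
    exact mul_le_mul_of_nonneg_left this hp0

lemma card_S (α β : ℝ) (hα : 1 ≤ α) (hβ : 0 ≤ β) (M : ℕ) :
    ((M:ℝ) - β - α) / α
      < (((Finset.Icc 1 M).filter (fun m : ℕ => (m : ℤ) ∈ Beatty α β)).card : ℝ) := by
  have hα0 : (0:ℝ) < α := by linarith
  set S := (Finset.Icc 1 M).filter (fun m : ℕ => (m : ℤ) ∈ Beatty α β) with hS
  rcases lt_or_ge ((M:ℝ) - β) α with h | h
  · calc ((M:ℝ) - β - α)/α < 0 := div_neg_of_neg_of_pos (by linarith) hα0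
    _ ≤ S.card := by positivity
  · set x := ((M:ℝ) - β) / α with hx
    have hx1 : (1:ℝ) ≤ x := (one_le_div hα0).2 h
    set K := ⌊x⌋₊ with hK
    have hmono : ∀ a b : ℕ, a < b → ⌊(a:ℝ) * α + β⌋ < ⌊(b:ℝ) * α + β⌋ := by
      intro a b hab
      have hb : (a:ℝ) + 1 ≤ b := by exact_mod_cast hab
      have h1 : (a:ℝ) * α + β + 1 ≤ (b:ℝ) * α + β := by nlinarith
      have h2 := Int.floor_le_floor h1
      rw [show (a:ℝ) * α + β + 1 = ((a:ℝ) * α + β) + 1 by ring, Int.floor_add_one] at h2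
      omega
    have hmaps : ∀ n ∈ Finset.Icc 1 K, (⌊(n:ℝ) * α + β⌋).toNat ∈ S := by
      intro n hn
      rw [Finset.mem_Icc] at hn
      have hn1 : (1:ℝ) ≤ n := by exact_mod_cast hn.1
      have hnK : (n:ℝ) ≤ x := le_trans (by exact_mod_cast hn.2) (Nat.floor_le (by linarith))
      have hnα : (n:ℝ) * α ≤ (M:ℝ) - β := by
        rw [hx] at hnK
        exact (le_div_iff₀ hα0).1 hnK
      have hfl : (1:ℤ) ≤ ⌊(n:ℝ) * α + β⌋ := by
        rw [Int.le_floor]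
        push_cast
        nlinarith
      have hfu : ⌊(n:ℝ) * α + β⌋ ≤ (M:ℤ) := by
        have := Int.floor_le_floor (show (n:ℝ) * α + β ≤ (M:ℝ) by linarith)
        rwa [Int.floor_natCast] at this
      rw [hS, Finset.mem_filter, Finset.mem_Icc]
      refine ⟨⟨?_, ?_⟩, ?_⟩
      · omega
      · omega
      · have hcast : (((⌊(n:ℝ) * α + β⌋).toNat : ℕ) : ℤ) = ⌊(n:ℝ) * α + β⌋ :=
          Int.toNat_of_nonneg (by omega)
        rw [hcast]
        exact ⟨n, hn.1, rfl⟩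
    have hinj : Set.InjOn (fun n : ℕ => (⌊(n:ℝ) * α + β⌋).toNat) (Finset.Icc 1 K) := by
      intro a ha b hb heq
      by_contra hne
      have h1 : (0:ℤ) ≤ ⌊(a:ℝ) * α + β⌋ := by
        rw [Int.le_floor]; push_cast; positivity
      have h2 : (0:ℤ) ≤ ⌊(b:ℝ) * α + β⌋ := by
        rw [Int.le_floor]; push_cast; positivity
      simp only at heq
      rcases Nat.lt_or_ge a b with hlt | hge
      · have := hmono a b hlt; omega
      · have hlt : b < a := by omega
        have := hmono b a hlt; omega
    have hcard : K ≤ S.card := by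
      have := Finset.card_le_card_of_injOn _ hmaps hinj
      rwa [Nat.card_Icc, Nat.add_sub_cancel] at this
    have hxm : ((M:ℝ) - β - α)/α = x - 1 := by
      rw [hx]; field_simp
    rw [hxm]
    calc x - 1 < K := Nat.sub_one_lt_floor x
    _ ≤ S.card := by exact_mod_cast hcard

end HypAux

theorem hyperbola_point_from_expsum_bound (p : ℕ) (hp : p.Prime) (z : ℤ)
    (hz : ¬ ((p : ℤ) ∣ z)) (α β : ℝ) (hα : 1 ≤ α) (hβ : 0 ≤ β)
    (M : ℕ) (hM0 : 0 < M) (hMp : M < p)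
    (hyp : ∀ y : ℕ, 1 ≤ y → y < p →
      ‖(∑ m ∈ (Finset.Icc 1 M).filter (fun m : ℕ => (m : ℤ) ∈ Beatty α β),
          ep p ((y : ZMod p) * (m : ZMod p)⁻¹))‖
        ≤ (M : ℝ) * ((M : ℝ) - β - α) / ((p : ℝ) * Real.log p * α)) :
    ∃ m mt : ℕ, 1 ≤ m ∧ m < p ∧ 1 ≤ mt ∧ mt < p ∧ (m : ℤ) ∈ Beatty α β ∧
      ((m * mt : ℕ) : ZMod p) = (z : ZMod p) ∧ max m mt ≤ M := by
  by_contra hcon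
  push_neg at hcon
  haveI : Fact p.Prime := ⟨hp⟩
  haveI : NeZero p := ⟨hp.ne_zero⟩
  have hp1 : 1 < p := hp.one_lt
  have hlogp : (0:ℝ) < Real.log p := Real.log_pos (by exact_mod_cast hp1)
  have hα0 : (0:ℝ) < α := by linarith
  have hppos : (0:ℝ) < p := by exact_mod_cast hp.pos
  have hMpos : (0:ℝ) < M := by exact_mod_cast hM0
  rcases lt_or_ge ((M:ℝ) - β - α) 0 with hL | hL
  · have h1 := hyp 1 le_rfl hp1
    have hneg : (M : ℝ) * ((M : ℝ) - β - α) / ((p : ℝ) * Real.log p * α) < 0 := by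
      apply div_neg_of_neg_of_pos
      · nlinarith
      · positivity
    exact absurd (h1.trans_lt hneg) (norm_nonneg _).not_gt
  set F := Finset.Icc 1 M with hF
  set S := F.filter (fun m : ℕ => (m : ℤ) ∈ Beatty α β) with hSdef
  set B := (M : ℝ) * ((M : ℝ) - β - α) / ((p : ℝ) * Real.log p * α) with hB
  have hBnn : 0 ≤ B := by
    rw [hB]
    apply div_nonneg (by nlinarith) (by positivity)
  have hno : ∀ m ∈ S, ∀ mt ∈ F, ((m * mt : ℕ) : ZMod p) ≠ ((z : ZMod p)) := by
    intro m hm mt hmt heq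
    rw [hSdef, Finset.mem_filter] at hm
    obtain ⟨hmF, hmB⟩ := hm
    rw [hF, Finset.mem_Icc] at hmF hmt
    exact absurd (max_le hmF.2 hmt.2)
      (not_le.2 (hcon m mt hmF.1 (lt_of_le_of_lt hmF.2 hMp) hmt.1
        (lt_of_le_of_lt hmt.2 hMp) hmB heq))
  have hzne : (z : ZMod p) ≠ 0 := fun hc => hz ((ZMod.intCast_zmod_eq_zero_iff_dvd z p).1 hc)
  have hmne : ∀ m ∈ S, (m : ZMod p) ≠ 0 := by
    intro m hm hc
    rw [hSdef, Finset.mem_filter, hF, Finset.mem_Icc] at hm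
    have hd := (ZMod.natCast_eq_zero_iff m p).1 hc
    have := Nat.le_of_dvd (by omega) hd
    omega
  set G : ZMod p → ℂ := fun y => ∑ mt ∈ F, ep p (y * (mt : ZMod p)) with hG
  set W : ZMod p → ℂ :=
    fun y => ∑ m ∈ S, ep p ((-(y * (z : ZMod p))) * ((m : ZMod p)⁻¹)) with hW
  have key : ∑ y : ZMod p, G y * W y = 0 := by
    have step1 : ∀ y : ZMod p, G y * W y
        = ∑ mt ∈ F, ∑ m ∈ S,
            ep p (y * ((mt : ZMod p) - (z : ZMod p) * (m : ZMod p)⁻¹)) := by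
      intro y
      rw [hG, hW]
      dsimp only
      rw [Finset.sum_mul_sum]
      refine Finset.sum_congr rfl fun mt _ => Finset.sum_congr rfl fun m _ => ?_
      rw [← HypAux.ep_add]
      congr 1
      ring
    rw [Finset.sum_congr rfl (fun y _ => step1 y)]
    rw [Finset.sum_comm]
    refine Finset.sum_eq_zero fun mt hmt => ?_
    rw [Finset.sum_comm]
    refine Finset.sum_eq_zero fun m hm => ?_
    apply HypAux.sum_ep_mul
    intro hc
    have hminv : (m : ZMod p) * (m : ZMod p)⁻¹ = 1 := mul_inv_cancel₀ (hmne m hm)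
    have hmt' : (mt : ZMod p) = (z : ZMod p) * (m : ZMod p)⁻¹ := by
      have := sub_eq_zero.1 hc
      exact this
    have : ((m * mt : ℕ) : ZMod p) = (z : ZMod p) := by
      push_cast
      rw [hmt']
      calc (m : ZMod p) * ((z : ZMod p) * (m : ZMod p)⁻¹)
          = (z : ZMod p) * ((m : ZMod p) * (m : ZMod p)⁻¹) := by ring
      _ = (z : ZMod p) := by rw [hminv, mul_one]
    exact hno m hm mt hmt this
  have hG0 : G 0 = (M : ℂ) := by
    rw [hG]
    dsimp only
    rw [Finset.sum_congr rfl (fun mt _ => by rw [zero_mul, HypAux.ep_zero])]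
    rw [Finset.sum_const, hF, Nat.card_Icc, Nat.add_sub_cancel]
    simp
  have hW0 : W 0 = (S.card : ℂ) := by
    rw [hW]
    dsimp only
    rw [Finset.sum_congr rfl (fun m _ => by rw [zero_mul, neg_zero, zero_mul, HypAux.ep_zero])]
    rw [Finset.sum_const]
    simp
  have hsplit : G 0 * W 0 + ∑ y ∈ Finset.univ.erase (0 : ZMod p), G y * W y = 0 := by
    have h := Finset.add_sum_erase Finset.univ (fun y => G y * W y)
      (Finset.mem_univ (0 : ZMod p))
    rw [h, key]
  have heq : (M : ℂ) * (S.card : ℂ) = -∑ y ∈ Finset.univ.erase (0 : ZMod p), G y * W y := by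
    rw [← hG0, ← hW0]
    linear_combination hsplit
  have habs0 : (M : ℝ) * (S.card : ℝ)
      ≤ ∑ y ∈ Finset.univ.erase (0 : ZMod p), ‖G y * W y‖ := by
    have h1 : (M : ℝ) * (S.card : ℝ) = ‖(M : ℂ) * (S.card : ℂ)‖ := by
      rw [norm_mul, Complex.norm_natCast, Complex.norm_natCast]
    rw [h1, heq, norm_neg]
    exact norm_sum_le _ _
  have hWb : ∀ y ∈ Finset.univ.erase (0 : ZMod p), ‖W y‖ ≤ B := by
    intro y hy
    have hy0 : y ≠ 0 := (Finset.mem_erase.1 hy).1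
    set u := -(y * (z : ZMod p)) with hu
    have hune : u ≠ 0 := by
      rw [hu, neg_ne_zero]
      exact mul_ne_zero hy0 hzne
    have hval1 : 1 ≤ u.val := Nat.one_le_iff_ne_zero.2 (fun hc => hune ((ZMod.val_eq_zero u).1 hc))
    have hval2 : u.val < p := u.val_lt
    have hcast : ((u.val : ℕ) : ZMod p) = u := by simp [ZMod.natCast_val, ZMod.cast_id]
    have hb := hyp u.val hval1 hval2
    rw [hcast] at hb
    rw [hW]
    exact hb
  have hGb : ∀ y ∈ Finset.univ.erase (0 : ZMod p),
      ‖G y‖ ≤ (p:ℝ) / (2 * min (y.val : ℝ) ((p:ℝ) - y.val)) := by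
    intro y hy
    exact HypAux.G_bound p hp1 M y (Finset.mem_erase.1 hy).1
  have hsum1 : ∑ y ∈ Finset.univ.erase (0 : ZMod p), ‖G y * W y‖
      ≤ (∑ y ∈ Finset.univ.erase (0 : ZMod p),
          (p:ℝ) / (2 * min (y.val : ℝ) ((p:ℝ) - y.val))) * B := by
    rw [Finset.sum_mul]
    refine Finset.sum_le_sum fun y hy => ?_
    rw [norm_mul]
    have hy0 : y ≠ 0 := (Finset.mem_erase.1 hy).1
    have hv1 : 1 ≤ y.val := Nat.one_le_iff_ne_zero.2 (fun hc => hy0 ((ZMod.val_eq_zero y).1 hc))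
    have hv2 : y.val < p := y.val_lt
    have hminpos : (0:ℝ) < min (y.val:ℝ) ((p:ℝ) - y.val) := by
      have h1 : (0:ℝ) < (y.val:ℝ) := by exact_mod_cast hv1
      have h2 : (y.val:ℝ) < (p:ℝ) := by exact_mod_cast hv2
      simp only [lt_min_iff]
      constructor <;> linarith
    exact mul_le_mul (hGb y hy) (hWb y hy) (norm_nonneg _) (by positivity)
  have hre : ∑ y ∈ Finset.univ.erase (0 : ZMod p),
      (p:ℝ) / (2 * min (y.val : ℝ) ((p:ℝ) - y.val))
      = ∑ v ∈ Finset.Icc 1 (p - 1), (p:ℝ) / (2 * min (v:ℝ) ((p:ℝ) - v)) := by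
    refine Finset.sum_nbij' (i := fun y => y.val) (j := fun v => (v : ZMod p)) ?_ ?_ ?_ ?_ ?_
    · intro a ha
      have ha0 : a ≠ 0 := (Finset.mem_erase.1 ha).1
      have h1 : 1 ≤ a.val := Nat.one_le_iff_ne_zero.2 (fun hc => ha0 ((ZMod.val_eq_zero a).1 hc))
      have h2 : a.val < p := a.val_lt
      rw [Finset.mem_Icc]
      omega
    · intro v hv
      rw [Finset.mem_Icc] at hv
      rw [Finset.mem_erase]
      refine ⟨?_, Finset.mem_univ _⟩
      intro hc
      have hd := (ZMod.natCast_eq_zero_iff v p).1 hc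
      have := Nat.le_of_dvd (by omega) hd
      omega
    · intro a _; simp [ZMod.natCast_val, ZMod.cast_id]
    · intro v hv
      rw [Finset.mem_Icc] at hv
      exact ZMod.val_natCast_of_lt (by omega)
    · intro a _; rfl
  have hkernel := HypAux.kernel_sum p hp
  have hcardS := HypAux.card_S α β hα hβ M
  have hfinal : (M:ℝ) * (S.card : ℝ) < (M:ℝ) * (S.card : ℝ) := by
    calc (M:ℝ) * (S.card : ℝ)
        ≤ ∑ y ∈ Finset.univ.erase (0 : ZMod p), ‖G y * W y‖ := habs0
    _ ≤ (∑ y ∈ Finset.univ.erase (0 : ZMod p),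
          (p:ℝ) / (2 * min (y.val : ℝ) ((p:ℝ) - y.val))) * B := hsum1
    _ = (∑ v ∈ Finset.Icc 1 (p - 1), (p:ℝ) / (2 * min (v:ℝ) ((p:ℝ) - v))) * B := by
          rw [hre]
    _ ≤ ((p:ℝ) * Real.log p) * B := mul_le_mul_of_nonneg_right hkernel hBnn
    _ = (M:ℝ) * (((M:ℝ) - β - α) / α) := by
          rw [hB]
          field_simp
    _ < (M:ℝ) * (S.card : ℝ) := mul_lt_mul_of_pos_left hcardS hMpos
  exact lt_irrefl _ hfinal
end
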